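/- arXiv:2401.16833 — 2 statements merged into one kernel-verified Lean document; each statement's English description precedes it below -/
import Mathlib

section
/- If A' ⊑ A and B' ⊑ B, then A' ⊞ B' ⊑ A ⊞ B and A' ⊛ B' ⊑ A ⊛ B. -/
open scoped BigOperators

noncomputable section

/-- A joint "distribution" bundle: a finite output alphabet together with a
function on `Bool × Y`. -/
structure JD where
  Y : Type
  fin : Fintype Y
  p : Bool → Y → ℝ

attribute [instance] JD.fin

/-- `A` is an actual joint probability distribution. -/
def JD.IsDist (A : JD) : Prop :=
  (∀ x y, 0 ≤ A.p x y) ∧ ∑ x : Bool, ∑ y, A.p x y = 1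

/-- `A` is stochastically degraded from `B`, via a channel `Q`. -/
def Degraded (A B : JD) : Prop :=
  ∃ Q : B.Y → A.Y → ℝ,
    (∀ w z, 0 ≤ Q w z) ∧ (∀ w, ∑ z, Q w z = 1) ∧
    ∀ x z, A.p x z = ∑ w, B.p x w * Q w z

/-- `A'` is an input permutation of `A`: same alphabet, and
`A'(x;y) = A(x ⊕ f(y); y)` for some `f`. -/
def InputPerm (A' A : JD) : Prop :=
  ∃ h : A'.Y = A.Y, ∃ f : A.Y → Bool,
    ∀ x y, A'.p x (cast h.symm y) = A.p (xor x (f y)) y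

/-- One step of the `inferior` relation. -/
def Step (A B : JD) : Prop := Degraded A B ∨ InputPerm A B

/-- `A ⊑ B`: a finite chain of degradation / input-permutation steps from `B`
down to `A`. -/
def Inferior : JD → JD → Prop := Relation.ReflTransGen Step

/-- `A ≡ B`: mutual inferiority. -/
def JDEquiv (A B : JD) : Prop := Inferior A B ∧ Inferior B A

/-- The minus polar operation `A ⊞ B`. -/
def minusOp (A B : JD) : JD :=
  ⟨A.Y × B.Y, inferInstance,
    fun u₀ y => ∑ x₁ : Bool, A.p (xor u₀ x₁) y.1 * B.p x₁ y.2⟩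

/-- The plus polar operation `A ⊛ B`. -/
def plusOp (A B : JD) : JD :=
  ⟨Bool × A.Y × B.Y, inferInstance,
    fun u₁ z => A.p (xor z.1 u₁) z.2.1 * B.p u₁ z.2.2⟩

/-- The superb distribution `S`: input `0` deterministically, output `?`. -/
def superb : JD := ⟨Unit, inferInstance, fun x _ => if x = false then 1 else 0⟩

/-- The pitiful distribution `P`: input uniform, output `?`. -/
def pitiful : JD := ⟨Unit, inferInstance, fun _ _ => 1 / 2⟩

/-- Bhattacharyya parameter. -/
def JD.Zp (A : JD) : ℝ := 2 * ∑ y, Real.sqrt (A.p false y * A.p true y)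

/-- Total variation parameter. -/
def JD.Kp (A : JD) : ℝ := (1 / 2) * ∑ y, |A.p false y - A.p true y|

/-- Conditional entropy `H(X|Y)` (base 2). -/
def JD.Hp (A : JD) : ℝ :=
  -∑ x : Bool, ∑ y, A.p x y * Real.logb 2 (A.p x y / (A.p false y + A.p true y))

lemma aux13_sum_ite {α : Type*} (s : Finset α) (p : Prop) [Decidable p] (f : α → ℝ) :
    (∑ a ∈ s, if p then f a else 0) = if p then ∑ a ∈ s, f a else 0 := by
  split <;> simp

/-- Lift a pointwise `Step → Inferior` fact through the transitive closure. -/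
lemma aux13_lift {f : JD → JD}
    (hf : ∀ X Z, Step X Z → Inferior (f X) (f Z)) :
    ∀ X Z, Inferior X Z → Inferior (f X) (f Z) := by
  intro X Z h
  induction h with
  | refl => exact Relation.ReflTransGen.refl
  | tail _ hstep ih => exact ih.trans (hf _ _ hstep)

lemma aux13_minus_left (C X Z : JD) (h : Step X Z) :
    Step (minusOp X C) (minusOp Z C) := by
  classical
  rcases h with ⟨Q, hQ0, hQ1, hQ⟩ | ⟨h, f, hf⟩
  · left
    refine ⟨fun w z => Q w.1 z.1 * (if z.2 = w.2 then 1 else 0), ?_, ?_, ?_⟩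
    · intro w z
      have := hQ0 w.1 z.1
      positivity
    · intro w
      show ∑ _ : _ × _, _ = (1:ℝ)
      erw [Fintype.sum_prod_type]
      simp [mul_ite, mul_one, mul_zero, Finset.sum_ite_eq', hQ1]
    · intro x z
      show (∑ x₁ : Bool, X.p (xor x x₁) z.1 * C.p x₁ z.2) = ∑ w : _ × _, _
      erw [Fintype.sum_prod_type]
      dsimp only [minusOp]
      simp only [mul_ite, mul_one, mul_zero, ite_mul, one_mul, zero_mul, aux13_sum_ite,
        Finset.sum_ite_eq, Finset.mem_univ, if_true]
      simp only [hQ, Finset.sum_mul, Finset.mul_sum]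
      rw [Finset.sum_comm]
      exact Finset.sum_congr rfl fun a _ => Finset.sum_congr rfl fun b _ => by ring
  · obtain ⟨Y', i', p'⟩ := X
    obtain ⟨Y, i, p⟩ := Z
    dsimp at h
    subst h
    simp only [cast_eq] at hf
    right
    refine ⟨rfl, fun w => f w.1, ?_⟩
    intro x w
    erw [cast_eq]
    simp only [cast_eq, minusOp]
    refine Finset.sum_congr rfl fun x₁ _ => ?_
    rw [hf]
    congr 2
    cases x <;> cases x₁ <;> cases f w.1 <;> rfl

lemma aux13_minus_right (C X Z : JD) (h : Step X Z) :
    Step (minusOp C X) (minusOp C Z) := by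
  classical
  rcases h with ⟨Q, hQ0, hQ1, hQ⟩ | ⟨h, f, hf⟩
  · left
    refine ⟨fun w z => (if z.1 = w.1 then 1 else 0) * Q w.2 z.2, ?_, ?_, ?_⟩
    · intro w z
      have := hQ0 w.2 z.2
      positivity
    · intro w
      show ∑ _ : _ × _, _ = (1:ℝ)
      erw [Fintype.sum_prod_type]
      simp [ite_mul, one_mul, zero_mul, Finset.sum_ite_eq', hQ1]
    · intro x z
      show (∑ x₁ : Bool, C.p (xor x x₁) z.1 * X.p x₁ z.2) = ∑ w : _ × _, _
      erw [Fintype.sum_prod_type, Finset.sum_comm]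
      dsimp only [minusOp]
      simp only [mul_ite, mul_one, mul_zero, ite_mul, one_mul, zero_mul, aux13_sum_ite,
        Finset.sum_ite_eq, Finset.mem_univ, if_true]
      simp only [hQ, Finset.sum_mul, Finset.mul_sum]
      rw [Finset.sum_comm]
      exact Finset.sum_congr rfl fun a _ => Finset.sum_congr rfl fun b _ => by ring
  · obtain ⟨Y', i', p'⟩ := X
    obtain ⟨Y, i, p⟩ := Z
    dsimp at h
    subst h
    simp only [cast_eq] at hf
    right
    refine ⟨rfl, fun w => f w.2, ?_⟩
    intro x w
    erw [cast_eq]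
    simp only [cast_eq, minusOp]
    rw [Fintype.sum_bool, Fintype.sum_bool]
    simp only [hf]
    cases x <;> cases f w.2 <;> simp <;> ring

lemma aux13_plus_left (C X Z : JD) (h : Step X Z) :
    Step (plusOp X C) (plusOp Z C) := by
  classical
  rcases h with ⟨Q, hQ0, hQ1, hQ⟩ | ⟨h, f, hf⟩
  · left
    refine ⟨fun w z => (if z.1 = w.1 then 1 else 0) * Q w.2.1 z.2.1 *
      (if z.2.2 = w.2.2 then 1 else 0), ?_, ?_, ?_⟩
    · intro w z
      have := hQ0 w.2.1 z.2.1
      positivity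
    · intro w
      show ∑ _ : _ × _, _ = (1:ℝ)
      erw [Fintype.sum_prod_type]
      simp [Fintype.sum_prod_type, ite_mul, mul_ite, one_mul, zero_mul, mul_one, mul_zero,
        Finset.sum_ite_eq', hQ1]
    · intro x z
      show X.p (xor z.1 x) z.2.1 * C.p x z.2.2 = ∑ w : _ × _ × _, _
      erw [Fintype.sum_prod_type]
      dsimp only [plusOp]
      simp only [Fintype.sum_prod_type]
      simp only [mul_ite, mul_one, mul_zero, ite_mul, one_mul, zero_mul, aux13_sum_ite,
        Finset.sum_ite_eq, Finset.mem_univ, if_true]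
      rw [hQ, Finset.sum_mul]
      exact Finset.sum_congr rfl fun a _ => by ring
  · obtain ⟨Y', i', p'⟩ := X
    obtain ⟨Y, i, p⟩ := Z
    dsimp at h
    subst h
    simp only [cast_eq] at hf
    left
    refine ⟨fun w z => if z = (xor w.1 (f w.2.1), w.2.1, w.2.2) then 1 else 0, ?_, ?_, ?_⟩
    · intro w z
      positivity
    · intro w
      simp [Finset.sum_ite_eq']
      exact Finset.card_eq_one.mpr ⟨_, by ext; simp; exact Iff.rfl⟩
    · intro x z
      show p' (xor z.1 x) z.2.1 * C.p x z.2.2 = _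
      dsimp only [plusOp]
      rw [Finset.sum_eq_single ((xor z.1 (f z.2.1), z.2.1, z.2.2) : Bool × Y' × C.Y)]
      · show _ = p (xor (xor z.1 (f z.2.1)) x) z.2.1 * C.p x z.2.2 * _
        erw [if_pos, mul_one, hf]
        · congr 2
          cases z.1 <;> cases x <;> cases f z.2.1 <;> rfl
        · simp [Bool.xor_assoc]
          rfl
      · rintro ⟨b, w1, y⟩ _ hc
        erw [if_neg, mul_zero]
        intro hz
        apply hc
        rw [hz]
        simp [Bool.xor_assoc]
      · intro hmem
        exact absurd (Finset.mem_univ _) hmem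

lemma aux13_plus_right (C X Z : JD) (h : Step X Z) :
    Inferior (plusOp C X) (plusOp C Z) := by
  classical
  rcases h with ⟨Q, hQ0, hQ1, hQ⟩ | ⟨h, f, hf⟩
  · refine Relation.ReflTransGen.single (Or.inl
      ⟨fun w z => (if z.1 = w.1 then 1 else 0) * (if z.2.1 = w.2.1 then 1 else 0) *
        Q w.2.2 z.2.2, ?_, ?_, ?_⟩)
    · intro w z
      have := hQ0 w.2.2 z.2.2
      positivity
    · intro w
      show ∑ _ : _ × _, _ = (1:ℝ)
      erw [Fintype.sum_prod_type]
      simp [Fintype.sum_prod_type, ite_mul, mul_ite, one_mul, zero_mul, mul_one, mul_zero,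
        Finset.sum_ite_eq', hQ1]
    · intro x z
      show C.p (xor z.1 x) z.2.1 * X.p x z.2.2 = ∑ w : _ × _ × _, _
      erw [Fintype.sum_prod_type]
      dsimp only [plusOp]
      simp only [Fintype.sum_prod_type]
      simp only [mul_ite, mul_one, mul_zero, ite_mul, one_mul, zero_mul, aux13_sum_ite,
        Finset.sum_ite_eq, Finset.mem_univ, if_true]
      rw [hQ, Finset.mul_sum]
      exact Finset.sum_congr rfl fun a _ => by ring
  · obtain ⟨Y', i', p'⟩ := X
    obtain ⟨Y, i, p⟩ := Z
    dsimp at h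
    subst h
    simp only [cast_eq] at hf
    set N : JD := ⟨Bool × C.Y × Y', inferInstance,
      fun x w => C.p (xor (xor w.1 (f w.2.2)) x) w.2.1 * p x w.2.2⟩ with hN
    have step1 : Step (plusOp C ⟨Y', i', p'⟩) N := by
      right
      refine ⟨rfl, fun w => f w.2.2, ?_⟩
      intro x w
      show C.p (xor w.1 x) w.2.1 * p' x w.2.2 = _
      rw [hf]
      show _ = C.p (xor (xor w.1 (f w.2.2)) (xor x (f w.2.2))) w.2.1 * p (xor x (f w.2.2)) w.2.2
      congr 2
      cases w.1 <;> cases x <;> cases f w.2.2 <;> rfl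
    have step2 : Step N (plusOp C ⟨Y', i, p⟩) := by
      left
      refine ⟨fun w z => if z = (xor w.1 (f w.2.2), w.2.1, w.2.2) then 1 else 0, ?_, ?_, ?_⟩
      · intro w z
        positivity
      · intro w
        simp [N, Finset.sum_ite_eq']
      · intro x z
        show C.p (xor (xor z.1 (f z.2.2)) x) z.2.1 * p x z.2.2 = _
        dsimp only [plusOp]
        rw [Finset.sum_eq_single ((xor z.1 (f z.2.2), z.2.1, z.2.2) : Bool × C.Y × Y')]
        · show _ = C.p (xor (xor z.1 (f z.2.2)) x) z.2.1 * p x z.2.2 * _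
          rw [if_pos, mul_one]
          simp [Bool.xor_assoc]
        · rintro ⟨b, w1, y⟩ _ hc
          rw [if_neg, mul_zero]
          intro hz
          apply hc
          rw [hz]
          simp [Bool.xor_assoc]
        · intro hmem
          exact absurd (Finset.mem_univ _) hmem
    exact Relation.ReflTransGen.head step1 (Relation.ReflTransGen.single step2)

theorem stmt13 (A A' B B' : JD)
    (hA : A.IsDist) (hB : B.IsDist) (hA' : A'.IsDist) (hB' : B'.IsDist)
    (h1 : Inferior A' A) (h2 : Inferior B' B) :
    Inferior (minusOp A' B') (minusOp A B) ∧
      Inferior (plusOp A' B') (plusOp A B) := by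
  constructor
  · exact (aux13_lift (f := fun X => minusOp X B')
      (fun X Z h => Relation.ReflTransGen.single (aux13_minus_left B' X Z h)) A' A h1).trans
      (aux13_lift (f := fun X => minusOp A X)
      (fun X Z h => Relation.ReflTransGen.single (aux13_minus_right A X Z h)) B' B h2)
  · exact (aux13_lift (f := fun X => plusOp X B')
      (fun X Z h => Relation.ReflTransGen.single (aux13_plus_left B' X Z h)) A' A h1).trans
      (aux13_lift (f := fun X => plusOp A X)
      (fun X Z h => aux13_plus_right A X Z h) B' B h2)

end
end

section
/- Every joint distribution A on {0,1} × Y (Y finite) satisfies P ⊑ A ⊑ S, where S is the 'superb' distribution (X = 0 deterministically, output = ?) and P is the 'pitiful' distribution (X uniform, output = ?), and ⊑ is the finite-chain closure of degradation and input permutation. -/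
open scoped BigOperators

noncomputable section

/-- Output distribution of `A`, input `z.1` deterministically (pre-perm form). -/
def aux1 (A : JD) : JD :=
  ⟨Bool × A.Y, inferInstance, fun x z => if x = false then A.p z.1 z.2 else 0⟩

/-- Output distribution of `A`, input equal to first output coordinate. -/
def aux2 (A : JD) : JD :=
  ⟨Bool × A.Y, inferInstance, fun x z => if x = z.1 then A.p z.1 z.2 else 0⟩

/-- `A` with an extra uniform bit in the output. -/
def aux3 (A : JD) : JD :=
  ⟨Bool × A.Y, inferInstance, fun x z => (1 / 2) * A.p x z.2⟩

/-- `aux3` with input flipped by the extra bit. -/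
def aux4 (A : JD) : JD :=
  ⟨Bool × A.Y, inferInstance, fun x z => (1 / 2) * A.p (xor x z.1) z.2⟩

theorem stmt14 (A : JD) (hA : A.IsDist) :
    Inferior pitiful A ∧ Inferior A superb := by
  classical
  obtain ⟨hnn, hsum⟩ := hA
  constructor
  · -- pitiful ⊑d aux4 ⊑p aux3 ⊑d A
    have s1 : Step pitiful (aux4 A) := by
      left
      refine ⟨fun _ _ => 1, fun _ _ => zero_le_one, fun _ => by show (∑ _z : Unit, (1:ℝ)) = 1; simp, ?_⟩
      intro x z
      show pitiful.p x z = ∑ w : Bool × A.Y, (aux4 A).p x w * 1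
      have key : ∑ w : Bool × A.Y, (aux4 A).p x w * 1
          = (1 / 2) * ∑ b : Bool, ∑ y : A.Y, A.p (xor x b) y := by
        rw [Fintype.sum_prod_type, Finset.mul_sum]
        refine Finset.sum_congr rfl fun b _ => ?_
        rw [Finset.mul_sum]
        refine Finset.sum_congr rfl fun y _ => ?_
        show (1 / 2) * A.p (xor x b) y * 1 = 1 / 2 * A.p (xor x b) y
        ring
      have hb : ∑ b : Bool, ∑ y : A.Y, A.p (xor x b) y
          = ∑ b : Bool, ∑ y : A.Y, A.p b y := by
        cases x
        · simp
        · simp [Fintype.sum_bool, add_comm]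
      rw [key, hb, hsum]
      simp [pitiful]
    have s2 : Step (aux4 A) (aux3 A) := by
      right
      exact ⟨rfl, fun z => z.1, fun x y => rfl⟩
    have s3 : Step (aux3 A) A := by
      left
      refine ⟨fun w z => if z.2 = w then 1 / 2 else 0, ?_, ?_, ?_⟩
      · intro w z; positivity
      · intro w
        show (∑ z : Bool × A.Y, if z.2 = w then (1:ℝ)/2 else 0) = 1
        rw [Fintype.sum_prod_type]
        simp [Finset.sum_ite_eq']
      · intro x z
        show (aux3 A).p x z = ∑ w : A.Y, A.p x w * if z.2 = w then 1 / 2 else 0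
        have : ∑ w : A.Y, A.p x w * (if z.2 = w then (1:ℝ) / 2 else 0)
            = ∑ w : A.Y, (if z.2 = w then A.p x w * (1 / 2) else 0) := by
          refine Finset.sum_congr rfl fun w _ => ?_
          split <;> simp
        rw [this, Finset.sum_ite_eq]
        simp [aux3, mul_comm]
    exact Relation.ReflTransGen.head s1 (Relation.ReflTransGen.head s2
      (Relation.ReflTransGen.single s3))
  · -- A ⊑d aux2 ⊑p aux1 ⊑d superb
    have s1 : Step A (aux2 A) := by
      left
      refine ⟨fun w z => if z = w.2 then 1 else 0, ?_, ?_, ?_⟩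
      · intro w z; positivity
      · intro w
        show (∑ z : A.Y, if z = w.2 then (1:ℝ) else 0) = 1
        simp [Finset.sum_ite_eq]
      · intro x z
        show A.p x z = ∑ w : Bool × A.Y, (aux2 A).p x w * if z = w.2 then 1 else 0
        have key : ∑ w : Bool × A.Y, (aux2 A).p x w * (if z = w.2 then (1:ℝ) else 0)
            = ∑ b : Bool, (if x = b then A.p b z else 0) := by
          rw [Fintype.sum_prod_type]
          refine Finset.sum_congr rfl fun b _ => ?_
          have : ∀ y : A.Y, (aux2 A).p x (b, y) * (if z = y then (1:ℝ) else 0)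
              = if z = y then (if x = b then A.p b y else 0) else 0 := by
            intro y
            simp only [aux2]
            split <;> simp
          simp_rw [this]
          rw [Finset.sum_ite_eq]
          simp
        rw [key]
        cases x <;> simp [Fintype.sum_bool]
    have s2 : Step (aux2 A) (aux1 A) := by
      right
      refine ⟨rfl, fun z => z.1, fun x y => ?_⟩
      show (aux2 A).p x y = (aux1 A).p (xor x y.1) y
      simp only [aux2, aux1]
      cases x <;> cases hy : y.1 <;> simp [hy]
    have s3 : Step (aux1 A) superb := by
      left
      refine ⟨fun _ z => A.p z.1 z.2, fun _ z => hnn z.1 z.2, ?_, ?_⟩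
      · intro w
        show ∑ z : Bool × A.Y, A.p z.1 z.2 = 1
        rw [Fintype.sum_prod_type]
        exact hsum
      · intro x z
        show (aux1 A).p x z = ∑ w : Unit, superb.p x w * A.p z.1 z.2
        cases x <;> simp [aux1, superb]
    exact Relation.ReflTransGen.head s1 (Relation.ReflTransGen.head s2
      (Relation.ReflTransGen.single s3))

end
end
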